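/- arXiv:2502.17869 — 6 statements merged into one kernel-verified Lean document; each statement's English description precedes it below -/
import Mathlib

section
/- Let n agents with binary valuations v_i : M → {0,1} and heterogeneous quantiles τ_i ∈ [0,1] receive a balanced allocation (each agent gets k = m/n items). Define k_i = min(k, k − ⌈τ_i k⌉ + 1). Then there exists a balanced allocation in which every agent's quantile value equals 1 if and only if there exists a system of pairwise disjoint sets (T_i)_{i∈N} with T_i ⊆ {g : v_i(g)=1} and |T_i| = k_i. -/
lemma sorted_getD_one_iff {l : List ℝ} (hs : l.Pairwise (· ≤ ·))
    (h01 : ∀ x ∈ l, x = 0 ∨ x = 1) {idx : ℕ} (hidx : idx < l.length) :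
    l.getD idx 0 = 1 ↔ l.length - idx ≤ l.count 1 := by
  rw [List.getD_eq_getElem l 0 hidx]
  have hpw := List.pairwise_iff_getElem.1 hs
  constructor
  · intro h1
    have hdrop : (l.drop idx).count 1 = (l.drop idx).length := by
      rw [List.count_eq_length]
      intro b hb
      obtain ⟨j, hj, rfl⟩ := List.getElem_of_mem hb
      rw [List.getElem_drop]
      rcases Nat.eq_or_lt_of_le (Nat.le_add_right idx j) with he | hlt
      · simp [← he, h1]
      · have hle := hpw idx (idx + j) hidx (by simp at hj; omega) hlt
        rw [h1] at hle
        rcases h01 _ (List.getElem_mem _) with h | h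
        · rw [h] at hle; linarith
        · exact h.symm
    calc l.length - idx = (l.drop idx).length := by simp
      _ = (l.drop idx).count 1 := hdrop.symm
      _ ≤ l.count 1 := by
          conv_rhs => rw [← List.take_append_drop idx l]
          rw [List.count_append]; omega
  · intro hc
    by_contra hne
    have h0 : l[idx] = 0 := (h01 _ (List.getElem_mem _)).resolve_right hne
    have htake : (l.take (idx + 1)).count 1 = 0 := by
      rw [List.count_eq_zero]
      intro hmem
      obtain ⟨j, hj, hjeq⟩ := List.getElem_of_mem hmem
      rw [List.getElem_take] at hjeq
      have hjlt : j < idx + 1 := lt_of_lt_of_le hj (by simp)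
      rcases Nat.lt_or_ge j idx with hlt | hge
      · have := hpw j idx (by omega) hidx hlt
        rw [hjeq, h0] at this; linarith
      · have hji : j = idx := by omega
        subst hji
        rw [h0] at hjeq; norm_num at hjeq
    have : l.count 1 ≤ l.length - (idx + 1) := by
      conv_lhs => rw [← List.take_append_drop (idx + 1) l]
      rw [List.count_append, htake]
      have := List.count_le_length (l := l.drop (idx+1)) (a := (1:ℝ))
      simp at this ⊢
      omega
    omega

/-- The τ-quantile value of a finite bundle `S`: the `⌈τ|S|⌉`-th smallest item value
(the minimum when τ = 0, by convention of index 1). Empty bundles get value 0. -/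
noncomputable def quantVal {α : Type*} (τ : ℝ) (v : α → ℝ) (S : Finset α) : ℝ :=
  ((S.val.map v).sort (· ≤ ·)).getD (⌈τ * (S.card : ℝ)⌉.toNat - 1) 0

lemma quantVal_eq_one_iff {M : Type*} [DecidableEq M] (v : M → ℝ)
    (hbin : ∀ g, v g = 0 ∨ v g = 1) (τ : ℝ) (S : Finset M) (k : ℕ) (hk : 0 < k)
    (hcard : S.card = k) (ht : (⌈τ * (k : ℝ)⌉).toNat ≤ k) :
    quantVal τ v S = 1 ↔
      k - ((⌈τ * (k : ℝ)⌉).toNat - 1) ≤ (S.filter fun g => v g = 1).card := by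
  set l := ((S.val.map v).sort (· ≤ ·)) with hl
  have hlen : l.length = k := by
    rw [hl, Multiset.length_sort, Multiset.card_map]; exact hcard
  have hs : l.Pairwise (· ≤ ·) := (S.val.map v).pairwise_sort _
  have h01 : ∀ x ∈ l, x = 0 ∨ x = 1 := by
    intro x hx
    rw [hl, Multiset.mem_sort, Multiset.mem_map] at hx
    obtain ⟨g, _, rfl⟩ := hx
    exact hbin g
  have hcount : l.count 1 = (S.filter fun g => v g = 1).card := by
    rw [hl]
    rw [show ((S.val.map v).sort (· ≤ ·)).count 1 = (S.val.map v).count 1 from by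
      rw [← Multiset.coe_count, Multiset.sort_eq]]
    rw [Multiset.count_map]
    rw [Finset.card_filter]
    simp [Finset.sum_boole, eq_comm, Multiset.filter_congr]
    congr 1
  have hidx : (⌈τ * (k : ℝ)⌉).toNat - 1 < l.length := by omega
  rw [quantVal, hcard, ← hl, sorted_getD_one_iff hs h01 hidx, hlen, hcount]

lemma exists_partition {ι M : Type*} [DecidableEq ι] [DecidableEq M]
    (s : Finset ι) (f : ι → ℕ) :
    ∀ R : Finset M, (∑ i ∈ s, f i) = R.card →
    ∃ g : ι → Finset M, (∀ i ∈ s, (g i).card = f i) ∧ (∀ i ∈ s, g i ⊆ R) ∧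
      (∀ i ∈ s, ∀ j ∈ s, i ≠ j → Disjoint (g i) (g j)) ∧ s.biUnion g = R := by
  induction s using Finset.induction_on with
  | empty =>
    intro R hR
    refine ⟨fun _ => ∅, by simp, by simp, by simp, ?_⟩
    simp at hR ⊢
    exact (Finset.card_eq_zero.1 hR.symm).symm
  | insert _ _ ha ih =>
    rename_i a s
    intro R hR
    rw [Finset.sum_insert ha] at hR
    obtain ⟨B, hBsub, hBcard⟩ := Finset.exists_subset_card_eq (s := R) (n := f a) (by omega)
    have hcard' : (∑ i ∈ s, f i) = (R \ B).card := by
      rw [Finset.card_sdiff_of_subset hBsub, hBcard]; omega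
    obtain ⟨g, hg1, hg2, hg3, hg4⟩ := ih (R \ B) hcard'
    refine ⟨fun i => if i = a then B else g i, ?_, ?_, ?_, ?_⟩
    · intro i hi
      beta_reduce
      rcases Finset.mem_insert.1 hi with rfl | his
      · rw [if_pos rfl]; exact hBcard
      · rw [if_neg (by rintro rfl; exact ha his)]; exact hg1 i his
    · intro i hi
      beta_reduce
      rcases Finset.mem_insert.1 hi with rfl | his
      · rw [if_pos rfl]; exact hBsub
      · rw [if_neg (by rintro rfl; exact ha his)]
        exact (hg2 i his).trans Finset.sdiff_subset
    · intro i hi j hj hij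
      beta_reduce
      rcases Finset.mem_insert.1 hi with rfl | his <;>
        rcases Finset.mem_insert.1 hj with rfl | hjs
      · exact absurd rfl hij
      · rw [if_pos rfl, if_neg (by rintro rfl; exact ha hjs)]
        exact Finset.disjoint_sdiff.mono_right (hg2 j hjs)
      · rw [if_pos rfl, if_neg (by rintro rfl; exact ha his)]
        exact Finset.sdiff_disjoint.mono_left (hg2 i his)
      · rw [if_neg (by rintro rfl; exact ha his), if_neg (by rintro rfl; exact ha hjs)]
        exact hg3 i his j hjs hij
    · rw [Finset.biUnion_insert, if_pos rfl]
      have : s.biUnion (fun i => if i = a then B else g i) = s.biUnion g := by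
        apply Finset.biUnion_congr rfl
        intro i hi
        rw [if_neg (by rintro rfl; exact ha hi)]
      rw [this, hg4, Finset.union_sdiff_of_subset hBsub]

/-- with m = kn items, binary values and heterogeneous quantiles, a
balanced allocation giving every agent quantile value 1 exists iff there is a system
of pairwise disjoint sets Tᵢ of value-1 items for i with |Tᵢ| = kᵢ = min(k, k−⌈τᵢk⌉+1). -/
theorem balanced_esw_one_iff_matching (n k : ℕ) (hn : 0 < n) (hk : 0 < k)
    {M : Type*} [Fintype M] [DecidableEq M] (hm : Fintype.card M = k * n)
    (v : Fin n → M → ℝ) (hbin : ∀ i g, v i g = 0 ∨ v i g = 1)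
    (τ : Fin n → ℝ) (hτ : ∀ i, 0 ≤ τ i ∧ τ i ≤ 1) :
    (∃ A : Fin n → Finset M,
        (∀ i j, i ≠ j → Disjoint (A i) (A j)) ∧
        Finset.univ.biUnion A = Finset.univ ∧
        (∀ i, (A i).card = k) ∧
        (∀ i, quantVal (τ i) (v i) (A i) = 1)) ↔
      (∃ T : Fin n → Finset M,
        (∀ i j, i ≠ j → Disjoint (T i) (T j)) ∧
        (∀ i, T i ⊆ Finset.univ.filter fun g => v i g = 1) ∧
        (∀ i, (T i).card = min k (k - (⌈τ i * (k : ℝ)⌉).toNat + 1))) := by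
  have hts : ∀ i, (⌈τ i * (k : ℝ)⌉).toNat ≤ k := by
    intro i
    have h1 : τ i * (k : ℝ) ≤ k := by
      nlinarith [(hτ i).1, (hτ i).2, Nat.cast_nonneg (α := ℝ) k]
    have h2 : ⌈τ i * (k : ℝ)⌉ ≤ (k : ℤ) := Int.ceil_le.2 (by exact_mod_cast h1)
    omega
  set ki : Fin n → ℕ := fun i => k - ((⌈τ i * (k : ℝ)⌉).toNat - 1) with hkidef
  have hmin : ∀ i, min k (k - (⌈τ i * (k : ℝ)⌉).toNat + 1) = ki i := by
    intro i
    have := hts i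
    simp only [hkidef]
    omega
  constructor
  · rintro ⟨A, hdisj, hcover, hcard, hqv⟩
    have hone : ∀ i, ki i ≤ ((A i).filter fun g => v i g = 1).card := fun i =>
      (quantVal_eq_one_iff (v i) (hbin i) (τ i) (A i) k hk (hcard i) (hts i)).1 (hqv i)
    have hex := fun i => Finset.exists_subset_card_eq
      (s := (A i).filter fun g => v i g = 1) (n := ki i) (hone i)
    choose T hT1 hT2 using hex
    refine ⟨T, ?_, ?_, ?_⟩
    · intro i j hij
      exact (hdisj i j hij).mono ((hT1 i).trans (Finset.filter_subset _ _))
        ((hT1 j).trans (Finset.filter_subset _ _))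
    · intro i x hx
      have h := hT1 i hx
      simp only [Finset.mem_filter] at h ⊢
      exact ⟨Finset.mem_univ x, h.2⟩
    · intro i
      rw [hmin i]
      exact hT2 i
  · rintro ⟨T, hdisj, hsub, hcardT⟩
    have hTk : ∀ i, (T i).card = ki i := fun i => (hcardT i).trans (hmin i)
    have hTle : ∀ i, (T i).card ≤ k := by
      intro i; rw [hTk i]; simp only [hkidef]; omega
    set R := (Finset.univ : Finset M) \ Finset.univ.biUnion T with hRdef
    have hbiU : (Finset.univ.biUnion T).card = ∑ i, (T i).card :=
      Finset.card_biUnion (fun i _ j _ hij => hdisj i j hij)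
    have hble : (Finset.univ.biUnion T).card ≤ k * n :=
      hm ▸ Finset.card_le_univ _
    have hsum : (∑ i, (k - (T i).card)) = R.card := by
      have h1 : R.card = k * n - (Finset.univ.biUnion T).card := by
        rw [hRdef, Finset.card_sdiff_of_subset (Finset.subset_univ _), Finset.card_univ, hm]
      have h2 : (∑ i : Fin n, (k - (T i).card)) + ∑ i, (T i).card = k * n := by
        rw [← Finset.sum_add_distrib]
        have he : ∀ i : Fin n, k - (T i).card + (T i).card = k :=
          fun i => Nat.sub_add_cancel (hTle i)
        rw [Finset.sum_congr rfl (fun i _ => he i)]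
        simp [Finset.sum_const, Finset.card_univ, mul_comm]
      omega
    obtain ⟨g, hg1, hg2, hg3, hg4⟩ :=
      exists_partition Finset.univ (fun i => k - (T i).card) R hsum
    have hTg : ∀ i j : Fin n, Disjoint (T i) (g j) := by
      intro i j
      exact Finset.disjoint_sdiff.mono
        (Finset.subset_biUnion_of_mem T (Finset.mem_univ i))
        (hg2 j (Finset.mem_univ j))
    refine ⟨fun i => T i ∪ g i, ?_, ?_, ?_, ?_⟩
    · intro i j hij
      rw [Finset.disjoint_union_left, Finset.disjoint_union_right,
        Finset.disjoint_union_right]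
      exact ⟨⟨hdisj i j hij, hTg i j⟩,
        ⟨(hTg j i).symm, hg3 i (Finset.mem_univ i) j (Finset.mem_univ j) hij⟩⟩
    · have hsplit : Finset.univ.biUnion (fun i => T i ∪ g i)
          = Finset.univ.biUnion T ∪ Finset.univ.biUnion g := by
        ext x
        simp only [Finset.mem_biUnion, Finset.mem_union, Finset.mem_univ, true_and]
        constructor
        · rintro ⟨i, h | h⟩
          · exact Or.inl ⟨i, h⟩
          · exact Or.inr ⟨i, h⟩
        · rintro (⟨i, h⟩ | ⟨i, h⟩)
          · exact ⟨i, Or.inl h⟩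
          · exact ⟨i, Or.inr h⟩
      rw [hsplit, hg4, hRdef, Finset.union_sdiff_of_subset (Finset.subset_univ _)]
    · intro i
      rw [Finset.card_union_of_disjoint (hTg i i), hg1 i (Finset.mem_univ i)]
      have := hTle i
      omega
    · intro i
      apply (quantVal_eq_one_iff (v i) (hbin i) (τ i) (T i ∪ g i) k hk ?_ (hts i)).2
      · have hsubf : T i ⊆ (T i ∪ g i).filter fun g' => v i g' = 1 := by
          intro x hx
          rw [Finset.mem_filter]
          refine ⟨Finset.mem_union_left _ hx, ?_⟩
          have := hsub i hx
          rw [Finset.mem_filter] at this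
          exact this.2
        calc k - ((⌈τ i * (k : ℝ)⌉).toNat - 1) = (T i).card := (hTk i).symm
          _ ≤ _ := Finset.card_le_card hsubf
      · rw [Finset.card_union_of_disjoint (hTg i i), hg1 i (Finset.mem_univ i)]
        have := hTle i
        omega
end

section
/- Consider n agents with quantile valuations and an allocation problem where each agent's value of a bundle is attained at a single item of the bundle (quantile property). Let A* be any allocation of all m items, and relabel agents so that v_1(A*_1) ≥ … ≥ v_n(A*_n). Then there exists an allocation A in which agents 1 through n−1 each receive a single item, agent n receives all remaining items, and the sum of values of agents 1,…,n−1 under A is at least (1 − 1/n) · Σ_j v_j(A*_j). Consequently some such 'scapegoat' allocation achieves utilitarian welfare at least (n−1)/n times the optimum. -/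
/-- scapegoat allocations. For quantile valuations over goods (bundle
value attained at some item, item values nonnegative), given any allocation A* with
agents sorted by value, there is an allocation giving agents 1,…,n−1 one item each
(agent n getting the rest) whose first n−1 values sum to at least (1 − 1/n)·USW(A*). -/
theorem scapegoat_allocation (n : ℕ) (hn : 2 ≤ n)
    {M : Type*} [Fintype M] [DecidableEq M] (hM : n ≤ Fintype.card M)
    (w : Fin n → M → ℝ) (hw : ∀ j g, 0 ≤ w j g)
    (v : Fin n → Finset M → ℝ)
    (hquant : ∀ j (S : Finset M), S.Nonempty → ∃ g ∈ S, v j S = w j g)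
    (hempty : ∀ j, v j ∅ = 0)
    (Astar : Fin n → Finset M)
    (hdisj : ∀ i j, i ≠ j → Disjoint (Astar i) (Astar j))
    (hcover : Finset.univ.biUnion Astar = Finset.univ)
    (hsorted : ∀ i j : Fin n, i ≤ j → v j (Astar j) ≤ v i (Astar i)) :
    ∃ A : Fin n → Finset M,
      (∀ i j, i ≠ j → Disjoint (A i) (A j)) ∧
      Finset.univ.biUnion A = Finset.univ ∧
      (∀ j : Fin n, (j : ℕ) < n - 1 → (A j).card = 1) ∧
      (1 - 1 / (n : ℝ)) * ∑ j, v j (Astar j) ≤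
        ∑ j ∈ Finset.univ.filter (fun j : Fin n => (j : ℕ) < n - 1), v j (A j) := by
  classical
  have hMpos : 0 < Fintype.card M := by omega
  have hMne : Nonempty M := Fintype.card_pos_iff.mp hMpos
  choose g hg hvg using fun j (h : (Astar j).Nonempty) => hquant j (Astar j) h
  set F : Finset (Fin n) := Finset.univ.filter (fun j : Fin n => (j : ℕ) < n - 1) with hF
  set NE : Finset (Fin n) := F.filter (fun j => (Astar j).Nonempty) with hNE
  set EM : Finset (Fin n) := F.filter (fun j => ¬ (Astar j).Nonempty) with hEM
  set f0 : Fin n → M := fun j =>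
    if h : (Astar j).Nonempty then g j h else Classical.arbitrary M with hf0
  set S : Finset M := NE.image f0 with hS
  set L : Finset M := Finset.univ \ S with hL
  have hcardLE : EM.card ≤ L.card := by
    have h1 : S.card ≤ NE.card := Finset.card_image_le
    have h2 : NE.card + EM.card ≤ n := by
      have h3 := Finset.card_filter_add_card_filter_not
        (s := F) (p := fun j => (Astar j).Nonempty)
      have h4 : F.card ≤ n := by
        calc F.card ≤ (Finset.univ : Finset (Fin n)).card := Finset.card_filter_le _ _
        _ = n := by simp
      rw [← hNE, ← hEM] at h3
      omega
    have h3 : L.card = Fintype.card M - S.card := by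
      rw [hL, Finset.card_sdiff_of_subset (Finset.subset_univ S), Finset.card_univ]
    omega
  obtain ⟨L', hL'sub, hL'card⟩ := Finset.exists_subset_card_eq hcardLE
  have e : {x // x ∈ EM} ≃ {x // x ∈ L'} := Finset.equivOfCardEq hL'card.symm
  set f : Fin n → M := fun j =>
    if h : (Astar j).Nonempty then g j h
    else if h2 : j ∈ EM then ((e ⟨j, h2⟩ : {x // x ∈ L'}) : M)
    else Classical.arbitrary M with hf
  -- basic facts
  have hmemEM : ∀ j ∈ F, ¬ (Astar j).Nonempty → j ∈ EM := by
    intro j hj hne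
    rw [hEM]; exact Finset.mem_filter.mpr ⟨hj, hne⟩
  have hfS : ∀ j ∈ F, (Astar j).Nonempty → f j ∈ S := by
    intro j hj hne
    have : f j = f0 j := by simp [hf, hf0, dif_pos hne]
    rw [this, hS]
    exact Finset.mem_image_of_mem f0 (Finset.mem_filter.mpr ⟨hj, hne⟩)
  have hfL : ∀ j ∈ F, ¬ (Astar j).Nonempty → f j ∉ S := by
    intro j hj hne
    have h2 := hmemEM j hj hne
    have : f j = ((e ⟨j, h2⟩ : {x // x ∈ L'}) : M) := by
      simp [hf, dif_neg hne, dif_pos h2]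
    have hmem : f j ∈ L' := by rw [this]; exact (e ⟨j, h2⟩).2
    have : f j ∈ L := hL'sub hmem
    rw [hL] at this
    exact (Finset.mem_sdiff.mp this).2
  have hinj : ∀ i ∈ F, ∀ j ∈ F, f i = f j → i = j := by
    intro i hi j hj hfij
    by_cases hi' : (Astar i).Nonempty <;> by_cases hj' : (Astar j).Nonempty
    · -- both nonempty
      by_contra hne
      have hfi : f i = g i hi' := by simp [hf, dif_pos hi']
      have hfj : f j = g j hj' := by simp [hf, dif_pos hj']
      have h1 : g i hi' ∈ Astar j := by
        rw [← hfi, hfij, hfj]; exact hg j hj'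
      exact (Finset.disjoint_left.mp (hdisj i j hne) (hg i hi')) h1
    · exact absurd (hfij ▸ hfS i hi hi') (hfL j hj hj')
    · exact absurd (hfij.symm ▸ hfS j hj hj') (hfL i hi hi')
    · -- both empty
      have h2i := hmemEM i hi hi'
      have h2j := hmemEM j hj hj'
      have hfi : f i = ((e ⟨i, h2i⟩ : {x // x ∈ L'}) : M) := by
        simp [hf, dif_neg hi', dif_pos h2i]
      have hfj : f j = ((e ⟨j, h2j⟩ : {x // x ∈ L'}) : M) := by
        simp [hf, dif_neg hj', dif_pos h2j]
      have : (⟨i, h2i⟩ : {x // x ∈ EM}) = ⟨j, h2j⟩ := by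
        apply e.injective
        apply Subtype.ext
        rw [← hfi, ← hfj, hfij]
      exact congrArg Subtype.val this
  -- the allocation
  set A : Fin n → Finset M := fun j =>
    if (j : ℕ) < n - 1 then {f j} else Finset.univ \ F.image f with hA
  have hlastA : ∀ j : Fin n, ¬ (j : ℕ) < n - 1 → A j = Finset.univ \ F.image f := by
    intro j hj; simp [hA, if_neg hj]
  have hAj : ∀ j : Fin n, (j : ℕ) < n - 1 → A j = {f j} := by
    intro j hj; simp [hA, if_pos hj]
  have hmemF : ∀ j : Fin n, (j : ℕ) < n - 1 → j ∈ F := by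
    intro j hj; rw [hF]; exact Finset.mem_filter.mpr ⟨Finset.mem_univ j, hj⟩
  refine ⟨A, ?_, ?_, ?_, ?_⟩
  · -- disjointness
    intro i j hne
    by_cases hi : (i : ℕ) < n - 1 <;> by_cases hj : (j : ℕ) < n - 1
    · rw [hAj i hi, hAj j hj, Finset.disjoint_singleton]
      intro hfij
      exact hne (hinj i (hmemF i hi) j (hmemF j hj) hfij)
    · rw [hAj i hi, hlastA j hj, Finset.disjoint_singleton_left]
      intro hmem
      exact (Finset.mem_sdiff.mp hmem).2 (Finset.mem_image_of_mem f (hmemF i hi))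
    · rw [hAj j hj, hlastA i hi, Finset.disjoint_singleton_right]
      intro hmem
      exact (Finset.mem_sdiff.mp hmem).2 (Finset.mem_image_of_mem f (hmemF j hj))
    · exfalso
      have := i.isLt; have := j.isLt
      exact hne (Fin.ext (by omega))
  · -- cover
    apply Finset.eq_univ_of_forall
    intro x
    rw [Finset.mem_biUnion]
    by_cases hx : x ∈ F.image f
    · obtain ⟨j, hjF, rfl⟩ := Finset.mem_image.mp hx
      have hj : (j : ℕ) < n - 1 := (Finset.mem_filter.mp hjF).2
      exact ⟨j, Finset.mem_univ j, by rw [hAj j hj]; exact Finset.mem_singleton_self _⟩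
    · refine ⟨⟨n - 1, by omega⟩, Finset.mem_univ _, ?_⟩
      rw [hlastA _ (by simp)]
      exact Finset.mem_sdiff.mpr ⟨Finset.mem_univ x, hx⟩
  · -- cards
    intro j hj
    rw [hAj j hj]
    exact Finset.card_singleton _
  · -- the sum inequality
    set last : Fin n := ⟨n - 1, by omega⟩ with hlast
    have hsing : ∀ (j : Fin n) (x : M), v j {x} = w j x := by
      intro j x
      obtain ⟨y, hy, hvy⟩ := hquant j {x} (Finset.singleton_nonempty x)
      rw [Finset.mem_singleton] at hy
      subst hy
      exact hvy
    have hcompl : Finset.univ.filter (fun j : Fin n => ¬ (j : ℕ) < n - 1) = {last} := by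
      ext j
      simp only [Finset.mem_filter, Finset.mem_univ, true_and, Finset.mem_singleton, hlast,
        Fin.ext_iff]
      have := j.isLt
      omega
    have hsplit : ∑ j, v j (Astar j) = (∑ j ∈ F, v j (Astar j)) + v last (Astar last) := by
      rw [← Finset.sum_filter_add_sum_filter_not Finset.univ
        (fun j : Fin n => (j : ℕ) < n - 1) (fun j => v j (Astar j)), hcompl,
        Finset.sum_singleton, hF]
    have hmin : (n : ℝ) * v last (Astar last) ≤ ∑ j, v j (Astar j) := by
      have hle : ∀ j ∈ (Finset.univ : Finset (Fin n)), v last (Astar last) ≤ v j (Astar j) := by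
        intro j _
        apply hsorted j last
        rw [Fin.le_def]
        have := j.isLt
        simp [hlast]; omega
      have := Finset.card_nsmul_le_sum Finset.univ (fun j => v j (Astar j)) _ hle
      simpa [nsmul_eq_mul, Finset.card_univ] using this
    have hFge : ∑ j ∈ F, v j (Astar j) ≤ ∑ j ∈ F, v j (A j) := by
      apply Finset.sum_le_sum
      intro j hj
      have hjlt : (j : ℕ) < n - 1 := (Finset.mem_filter.mp hj).2
      rw [hAj j hjlt, hsing j (f j)]
      by_cases hne : (Astar j).Nonempty
      · have : f j = g j hne := by simp [hf, dif_pos hne]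
        rw [this, ← hvg j hne]
      · rw [Finset.not_nonempty_iff_eq_empty.mp hne, hempty j]
        exact hw j (f j)
    have hn0 : (0 : ℝ) < n := by positivity
    have hvle : v last (Astar last) ≤ (∑ j, v j (Astar j)) / n := by
      rw [le_div_iff₀ hn0]
      linarith [hmin]
    have hring : (1 - 1 / (n : ℝ)) * ∑ j, v j (Astar j)
        = (∑ j, v j (Astar j)) - (∑ j, v j (Astar j)) / n := by ring
    calc (1 - 1 / (n : ℝ)) * ∑ j, v j (Astar j)
        = (∑ j, v j (Astar j)) - (∑ j, v j (Astar j)) / n := hring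
      _ ≤ (∑ j, v j (Astar j)) - v last (Astar last) := by linarith
      _ = ∑ j ∈ F, v j (Astar j) := by linarith [hsplit]
      _ ≤ ∑ j ∈ F, v j (A j) := hFge
end

section
/- For quantile valuations over goods (nonnegative item values), if some agent i* has quantile τ_{i*} = 1, then the maximum utilitarian social welfare over all allocations equals the maximum, over assignments of one distinct item to each agent j ≠ i* plus the best remaining item to i*, of the total value; equivalently, it equals the maximum weight of a perfect matching of all n agents to n distinct items in the bipartite graph with edge weight v_j(g). -/
/-- if some agent i* has quantile 1 (values a bundle at its maximum item
value), then the maximum utilitarian welfare over all allocations equals the maximum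
weight of a perfect matching of the n agents to n distinct items. -/
theorem optimist_usw_eq_matching (n : ℕ) (hn : 0 < n)
    {M : Type*} [Fintype M] [DecidableEq M] (hM : n ≤ Fintype.card M)
    (w : Fin n → M → ℝ) (hw : ∀ j g, 0 ≤ w j g)
    (v : Fin n → Finset M → ℝ)
    (hquant : ∀ j (S : Finset M), S.Nonempty → ∃ g ∈ S, v j S = w j g)
    (hempty : ∀ j, v j ∅ = 0)
    (istar : Fin n)
    (hstar : ∀ (S : Finset M) (hS : S.Nonempty), v istar S = S.sup' hS (w istar)) :
    sSup {u : ℝ | ∃ A : Fin n → Finset M,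
        (∀ i j, i ≠ j → Disjoint (A i) (A j)) ∧
        Finset.univ.biUnion A = Finset.univ ∧
        u = ∑ j, v j (A j)} =
      sSup {u : ℝ | ∃ f : Fin n → M, Function.Injective f ∧ u = ∑ j, w j (f j)} := by
  classical
  set S : Set ℝ := {u : ℝ | ∃ A : Fin n → Finset M,
        (∀ i j, i ≠ j → Disjoint (A i) (A j)) ∧
        Finset.univ.biUnion A = Finset.univ ∧
        u = ∑ j, v j (A j)} with hSdef
  set T : Set ℝ := {u : ℝ | ∃ f : Fin n → M, Function.Injective f ∧ u = ∑ j, w j (f j)}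
    with hTdef
  have hSfin : S.Finite := by
    apply Set.Finite.subset (Set.finite_range (fun A : Fin n → Finset M => ∑ j, v j (A j)))
    rintro u ⟨A, -, -, rfl⟩; exact ⟨A, rfl⟩
  have hTfin : T.Finite := by
    apply Set.Finite.subset (Set.finite_range (fun f : Fin n → M => ∑ j, w j (f j)))
    rintro u ⟨f, -, rfl⟩; exact ⟨f, rfl⟩
  have hcard : 0 < Fintype.card M := lt_of_lt_of_le hn hM
  have hMne : Nonempty M := Fintype.card_pos_iff.mp hcard
  obtain ⟨e0⟩ : Nonempty (Fin n ↪ M) :=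
    Function.Embedding.nonempty_of_card_le (by simpa using hM)
  have hTne : T.Nonempty := ⟨_, e0, e0.injective, rfl⟩
  have hSne : S.Nonempty := by
    refine ⟨_, fun j => if j = istar then Finset.univ else ∅, ?_, ?_, rfl⟩
    · intro i j hij
      by_cases hi : i = istar
      · have hj : ¬ j = istar := fun h => hij (h ▸ hi ▸ rfl)
        simp [hi, hj]
      · simp [hi]
    · apply Finset.eq_univ_iff_forall.mpr
      intro m
      exact Finset.mem_biUnion.mpr ⟨istar, Finset.mem_univ _, by simp⟩
  have hTbdd := hTfin.bddAbove
  have hSbdd := hSfin.bddAbove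
  apply le_antisymm
  · apply csSup_le hSne
    rintro u ⟨A, hdisj, hcov, rfl⟩
    -- build an injective f dominating the allocation welfare
    set E : Finset (Fin n) := Finset.univ.filter (fun j => (A j).Nonempty) with hEdef
    set g0 : Fin n → M := fun j =>
      if h : (A j).Nonempty then (hquant j (A j) h).choose else Classical.arbitrary M
      with hg0def
    have hg0mem : ∀ j, (A j).Nonempty → g0 j ∈ A j := by
      intro j h
      simp only [hg0def, dif_pos h]
      exact (hquant j (A j) h).choose_spec.1
    have hg0val : ∀ j, (A j).Nonempty → v j (A j) = w j (g0 j) := by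
      intro j h
      simp only [hg0def, dif_pos h]
      exact (hquant j (A j) h).choose_spec.2
    set G : Finset M := E.image g0 with hGdef
    have hinjOn : Set.InjOn g0 E := by
      intro a ha b hb hab
      by_contra hne
      have hda := hdisj a b hne
      have ha' : (A a).Nonempty := (Finset.mem_filter.mp ha).2
      have hb' : (A b).Nonempty := (Finset.mem_filter.mp hb).2
      exact (Finset.disjoint_left.mp hda (hg0mem a ha')) (hab ▸ hg0mem b hb')
    have hGcard : G.card = E.card := Finset.card_image_of_injOn hinjOn
    have hEle : E.card ≤ n := by simpa using (Finset.card_le_univ E)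
    obtain ⟨e⟩ : Nonempty (↥(Eᶜ : Finset (Fin n)) ↪ ↥(Gᶜ : Finset M)) :=
      Function.Embedding.nonempty_of_card_le (by
        simp only [Fintype.card_coe, Finset.card_compl, Fintype.card_fin, hGcard]
        omega)
    set f : Fin n → M := fun j =>
      if h : j ∈ E then g0 j else (e ⟨j, Finset.mem_compl.mpr h⟩ : M) with hfdef
    have hfinj : Function.Injective f := by
      intro a b hab
      by_cases ha : a ∈ E <;> by_cases hb : b ∈ E
      · simp only [hfdef, dif_pos ha, dif_pos hb] at hab
        exact hinjOn ha hb hab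
      · exfalso
        simp only [hfdef, dif_pos ha, dif_neg hb] at hab
        have h1 : g0 a ∈ G := Finset.mem_image_of_mem g0 ha
        have h2 : (e ⟨b, Finset.mem_compl.mpr hb⟩ : M) ∈ (Gᶜ : Finset M) :=
          (e ⟨b, Finset.mem_compl.mpr hb⟩).2
        rw [hab] at h1
        exact Finset.mem_compl.mp h2 h1
      · exfalso
        simp only [hfdef, dif_neg ha, dif_pos hb] at hab
        have h1 : g0 b ∈ G := Finset.mem_image_of_mem g0 hb
        have h2 : (e ⟨a, Finset.mem_compl.mpr ha⟩ : M) ∈ (Gᶜ : Finset M) :=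
          (e ⟨a, Finset.mem_compl.mpr ha⟩).2
        rw [← hab] at h1
        exact Finset.mem_compl.mp h2 h1
      · simp only [hfdef, dif_neg ha, dif_neg hb] at hab
        have := e.injective (Subtype.coe_injective hab)
        exact congrArg Subtype.val this
    have hle : ∑ j, v j (A j) ≤ ∑ j, w j (f j) := by
      apply Finset.sum_le_sum
      intro j _
      by_cases h : (A j).Nonempty
      · have hjE : j ∈ E := Finset.mem_filter.mpr ⟨Finset.mem_univ _, h⟩
        rw [hg0val j h]
        simp [hfdef, dif_pos hjE]
      · have : A j = ∅ := Finset.not_nonempty_iff_eq_empty.mp h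
        rw [this, hempty]
        exact hw j (f j)
    exact le_trans hle (le_csSup hTbdd ⟨f, hfinj, rfl⟩)
  · apply csSup_le hTne
    rintro u ⟨f, hfinj, rfl⟩
    set I : Finset M := (Finset.univ.erase istar).image f with hIdef
    set A : Fin n → Finset M := fun j =>
      if j = istar then Finset.univ \ I else {f j} with hAdef
    have hmemI : ∀ j, j ≠ istar → f j ∈ I := by
      intro j hj
      exact Finset.mem_image_of_mem f (Finset.mem_erase.mpr ⟨hj, Finset.mem_univ _⟩)
    have hstarI : f istar ∉ I := by
      intro h
      obtain ⟨j, hj, hfj⟩ := Finset.mem_image.mp h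
      exact (Finset.mem_erase.mp hj).1 (hfinj hfj)
    have hstarmem : f istar ∈ A istar := by
      simp [hAdef, hstarI]
    have hdisj : ∀ i j, i ≠ j → Disjoint (A i) (A j) := by
      intro i j hij
      by_cases hi : i = istar
      · have hj : j ≠ istar := fun h => hij (hi.trans h.symm)
        simp only [hAdef, if_pos hi, if_neg hj]
        rw [Finset.disjoint_singleton_right]
        simp [hmemI j hj]
      · by_cases hj : j = istar
        · simp only [hAdef, if_neg hi, if_pos hj]
          rw [Finset.disjoint_singleton_left]
          simp [hmemI i hi]
        · simp only [hAdef, if_neg hi, if_neg hj]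
          rw [Finset.disjoint_singleton_right, Finset.mem_singleton]
          exact fun h => hij (hfinj h.symm)
    have hcov : Finset.univ.biUnion A = Finset.univ := by
      apply Finset.eq_univ_iff_forall.mpr
      intro m
      rw [Finset.mem_biUnion]
      by_cases h : m ∈ I
      · obtain ⟨j, hj, hfj⟩ := Finset.mem_image.mp h
        refine ⟨j, Finset.mem_univ _, ?_⟩
        have hj' : j ≠ istar := (Finset.mem_erase.mp hj).1
        simp [hAdef, hj', hfj]
      · exact ⟨istar, Finset.mem_univ _, by simp [hAdef, h]⟩
    have hle : ∑ j, w j (f j) ≤ ∑ j, v j (A j) := by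
      apply Finset.sum_le_sum
      intro j _
      by_cases hj : j = istar
      · rw [hj]
        have hne : (A istar).Nonempty := ⟨f istar, hstarmem⟩
        rw [hstar (A istar) hne]
        exact Finset.le_sup' (w istar) hstarmem
      · have : A j = {f j} := by simp [hAdef, hj]
        rw [this]
        obtain ⟨g, hg, hgv⟩ := hquant j {f j} (Finset.singleton_nonempty _)
        rw [Finset.mem_singleton] at hg
        rw [hgv, hg]
    exact le_trans hle (le_csSup hSbdd ⟨A, hdisj, hcov, rfl⟩)
end

section
/- Let all agents have the same quantile τ = t/(t+1) (t a positive integer) and binary valuations v_i. Let M_0 = {g : v_i(g)=0 for all i} and M_1 = M \ M_0. If there exists an allocation of all items giving every agent value 1, then (i) there is a system of distinct representatives matching each agent i to a distinct item g with v_i(g)=1, and (ii) |M_0| ≤ t·|M_1| − n. -/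
lemma key_lemma (t : ℕ) (ht : 0 < t) {M : Type*} [DecidableEq M] (vi : M → ℝ)
    (hbin : ∀ g, vi g = 0 ∨ vi g = 1) (S : Finset M)
    (h : quantVal ((t : ℝ) / ((t : ℝ) + 1)) vi S = 1) :
    S.card + 1 ≤ (t + 1) * (S.filter (fun g => vi g = 1)).card := by
  classical
  set τ : ℝ := (t : ℝ) / ((t : ℝ) + 1) with hτ
  set l : List ℝ := (S.val.map vi).sort (· ≤ ·) with hl
  have hlen : l.length = S.card := by
    simp [hl]
  set k : ℕ := (⌈τ * (S.card : ℝ)⌉.toNat - 1) with hk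
  have hgetd : l.getD k 0 = 1 := h
  have hklt : k < l.length := by
    by_contra hc
    rw [List.getD_eq_default _ _ (le_of_not_gt hc)] at hgetd
    norm_num at hgetd
  have hval : l.get ⟨k, hklt⟩ = 1 := by
    rw [List.getD_eq_getElem _ _ hklt] at hgetd; exact hgetd
  have hmeml : ∀ x ∈ l, x = 0 ∨ x = 1 := by
    intro x hx
    rw [hl, Multiset.mem_sort] at hx
    obtain ⟨g, hg, rfl⟩ := Multiset.mem_map.mp hx
    exact hbin g
  have hsorted : l.Pairwise (· ≤ ·) := Multiset.pairwise_sort _ _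
  have hone : ∀ j (hj : j < l.length), k ≤ j → l.get ⟨j, hj⟩ = 1 := by
    intro j hj hkj
    rcases eq_or_lt_of_le hkj with rfl | hlt
    · exact hval
    · have hle : l.get ⟨k, hklt⟩ ≤ l.get ⟨j, hj⟩ :=
        List.Pairwise.rel_get_of_lt hsorted hlt
      rw [hval] at hle
      rcases hmeml _ (l.get_mem _) with h0 | h1
      · rw [h0] at hle; linarith
      · exact h1
  have hdrop : ∀ x ∈ l.drop k, x = (1:ℝ) := by
    intro x hx
    obtain ⟨i, hi, rfl⟩ := List.getElem_of_mem hx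
    rw [List.getElem_drop]
    exact hone _ _ (Nat.le_add_right _ _)
  have hcountdrop : (l.drop k).count 1 = l.length - k := by
    rw [List.count_eq_length.mpr (fun b hb => (hdrop b hb).symm), List.length_drop]
  have hcount_ge : l.length - k ≤ l.count 1 := by
    rw [← hcountdrop]
    exact (List.drop_sublist k l).count_le 1
  have hcount : l.count 1 = (S.filter (fun g => vi g = 1)).card := by
    have h1 : l.count 1 = Multiset.count 1 (S.val.map vi) := by
      rw [← Multiset.coe_count, Multiset.sort_eq]
    rw [h1, Multiset.count_map]
    rw [Finset.card_filter]
    simp [eq_comm, Finset.sum_boole]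
    congr 1
  set c := S.card with hc
  set L := (S.filter (fun g => vi g = 1)).card with hLc
  have hkc : k < c := by rwa [hlen] at hklt
  have hcL : c ≤ L + k := by
    have := hcount_ge
    rw [hcount, hlen] at this
    omega
  have hc0 : 0 < c := by omega
  have hτpos : 0 < τ * (c : ℝ) := by
    apply mul_pos
    · rw [hτ]; positivity
    · exact_mod_cast hc0
  have hceil : (1:ℤ) ≤ ⌈τ * (c : ℝ)⌉ := Int.ceil_pos.mpr hτpos
  have hkR : (k : ℝ) < τ * c := by
    have h1 : (k : ℤ) = ⌈τ * (c : ℝ)⌉ - 1 := by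
      rw [hk]
      omega
    have h2 : ((⌈τ * (c : ℝ)⌉ : ℝ)) - 1 < τ * c := by
      have := Int.ceil_lt_add_one (τ * (c:ℝ))
      linarith
    rw [show ((k:ℝ)) = ((k:ℤ):ℝ) by push_cast; ring, h1]
    push_cast
    linarith
  have hmain : (c : ℝ) < ((t:ℝ) + 1) * L := by
    have h1 : (c : ℝ) ≤ (L : ℝ) + k := by exact_mod_cast hcL
    have h2 : (c : ℝ) < L + τ * c := by linarith
    rw [hτ] at h2
    have ht1 : (0:ℝ) < (t:ℝ) + 1 := by positivity
    have h3 := mul_lt_mul_of_pos_right h2 ht1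
    have h4 : (t:ℝ)/((t:ℝ)+1)*(c:ℝ)*((t:ℝ)+1) = (t:ℝ)*(c:ℝ) := by field_simp
    rw [add_mul, h4] at h3
    linarith
  have : c < (t + 1) * L := by exact_mod_cast hmain
  omega

/-- common quantile τ = t/(t+1), binary valuations. If an allocation
gives every agent quantile value 1, then (i) there is a system of distinct
representatives matching each agent to a distinct value-1 item, and
(ii) |M₀| ≤ t·|M₁| − n, where M₀ is the set of universally 0-valued items. -/
theorem esw_one_necessary (n t : ℕ) (hn : 0 < n) (ht : 0 < t)
    {M : Type*} [Fintype M] [DecidableEq M]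
    (v : Fin n → M → ℝ) (hbin : ∀ i g, v i g = 0 ∨ v i g = 1)
    (A : Fin n → Finset M)
    (hdisj : ∀ i j, i ≠ j → Disjoint (A i) (A j))
    (hcover : Finset.univ.biUnion A = Finset.univ)
    (hall : ∀ i, quantVal ((t : ℝ) / ((t : ℝ) + 1)) (v i) (A i) = 1) :
    (∃ f : Fin n → M, Function.Injective f ∧ ∀ i, v i (f i) = 1) ∧
      (((Finset.univ.filter fun g => ∀ i, v i g = 0).card : ℤ) ≤
        (t : ℤ) * ((Finset.univ.filter fun g => ¬ ∀ i, v i g = 0).card : ℤ) - (n : ℤ)) := by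
  classical
  have key : ∀ i, (A i).card + 1 ≤ (t + 1) * ((A i).filter (fun g => v i g = 1)).card :=
    fun i => key_lemma t ht (v i) (hbin i) (A i) (hall i)
  set L : Fin n → Finset M := fun i => (A i).filter (fun g => v i g = 1) with hL
  have hLsubA : ∀ i, L i ⊆ A i := fun i => Finset.filter_subset _ _
  have hLne : ∀ i, (L i).Nonempty := by
    intro i
    rw [← Finset.card_pos]
    have := key i
    by_contra hc
    push_neg at hc
    interval_cases h : (L i).card
    · simp [h] at this
  -- SDR
  have hSDR : ∃ f : Fin n → M, Function.Injective f ∧ ∀ i, v i (f i) = 1 := by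
    refine ⟨fun i => (hLne i).choose, ?_, ?_⟩
    · intro i j hij
      by_contra hne
      have hi := (hLne i).choose_spec
      have hj := (hLne j).choose_spec
      have := hdisj i j hne
      have hij' : (hLne i).choose = (hLne j).choose := hij
      exact (Finset.disjoint_left.mp this (hLsubA i hi)) (hij' ▸ hLsubA j hj)
    · intro i
      have hi := (hLne i).choose_spec
      exact (Finset.mem_filter.mp hi).2
  refine ⟨hSDR, ?_⟩
  set M₀ := Finset.univ.filter fun g => ∀ i, v i g = 0 with hM₀
  set M₁ := Finset.univ.filter fun g => ¬ ∀ i, v i g = 0 with hM₁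
  have hdisjL : ∀ i ∈ (Finset.univ : Finset (Fin n)), ∀ j ∈ Finset.univ, i ≠ j →
      Disjoint (L i) (L j) := fun i _ j _ hij =>
    (hdisj i j hij).mono (hLsubA i) (hLsubA j)
  have hdisjA : ∀ i ∈ (Finset.univ : Finset (Fin n)), ∀ j ∈ Finset.univ, i ≠ j →
      Disjoint (A i) (A j) := fun i _ j _ hij => hdisj i j hij
  have hsumA : ∑ i, (A i).card = Fintype.card M := by
    rw [← Finset.card_biUnion hdisjA, hcover, Finset.card_univ]
  have hsumL : ∑ i, (L i).card ≤ M₁.card := by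
    rw [← Finset.card_biUnion hdisjL]
    apply Finset.card_le_card
    intro g hg
    obtain ⟨i, _, hgi⟩ := Finset.mem_biUnion.mp hg
    have h1 : v i g = 1 := (Finset.mem_filter.mp hgi).2
    rw [hM₁, Finset.mem_filter]
    refine ⟨Finset.mem_univ _, ?_⟩
    intro hall0
    rw [hall0 i] at h1
    norm_num at h1
  have hsum : ∑ i, ((A i).card + 1) ≤ ∑ i, (t + 1) * (L i).card :=
    Finset.sum_le_sum (fun i _ => key i)
  rw [Finset.sum_add_distrib, ← Finset.mul_sum] at hsum
  simp only [Finset.sum_const, Finset.card_univ, Fintype.card_fin, smul_eq_mul, mul_one] at hsum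
  rw [hsumA] at hsum
  have hMcard : M₀.card + M₁.card = Fintype.card M := by
    rw [hM₀, hM₁, ← Finset.card_univ]
    exact Finset.card_filter_add_card_filter_not _
  have hfin : M₀.card + n ≤ t * M₁.card := by
    have h1 : (t + 1) * (∑ i, (L i).card) ≤ (t + 1) * M₁.card :=
      Nat.mul_le_mul_left _ hsumL
    have h2 : M₀.card + M₁.card + n ≤ t * M₁.card + M₁.card := by
      calc M₀.card + M₁.card + n = Fintype.card M + n := by rw [hMcard]
        _ ≤ (t + 1) * M₁.card := le_trans hsum h1
        _ = t * M₁.card + M₁.card := by ring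
    omega
  have := hfin
  zify at this
  linarith
end

section
/- Conversely, with all agents having quantile τ = t/(t+1) and binary valuations, if every agent can be matched to a distinct item of value 1 and |M_0| ≤ t·|M_1| − n (where M_0 is the set of universally-0 items and M_1 = M \ M_0), then there exists an allocation of all items in which every agent's quantile value is 1. -/
lemma sort_repl (z l : ℕ) :
    (Multiset.replicate z (0:ℝ) + Multiset.replicate l 1).sort (· ≤ ·) =
      List.replicate z 0 ++ List.replicate l 1 := by
  refine (fun hp h1 h2 => List.Perm.eq_of_pairwise' (r := ((· ≤ ·) : ℝ → ℝ → Prop)) h1 h2 hp) ?_ ?_ ?_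
  · rw [← Multiset.coe_eq_coe, Multiset.sort_eq, ← Multiset.coe_add]
    rw [Multiset.coe_replicate, Multiset.coe_replicate]
  · exact Multiset.pairwise_sort _ _
  · rw [List.pairwise_append]
    refine ⟨?_, ?_, ?_⟩ <;> simp [List.pairwise_replicate]

lemma quantVal_eq_one (t : ℕ) (ht : 0 < t) {M : Type*} (v : M → ℝ) (S : Finset M)
    [DecidableEq M]
    (hbin : ∀ g ∈ S, v g = 0 ∨ v g = 1)
    (hz : (S.filter fun g => v g = 0).card + 1 ≤ t * (S.filter fun g => v g = 1).card) :
    quantVal ((t:ℝ)/((t:ℝ)+1)) v S = 1 := by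
  classical
  set z := (S.filter fun g => v g = 0).card with hzdef
  set l := (S.filter fun g => v g = 1).card with hldef
  have hfe : (S.filter fun g => ¬ v g = 0) = S.filter fun g => v g = 1 := by
    apply Finset.filter_congr
    intro g hg
    rcases hbin g hg with h | h <;> simp [h]
  have hcard : z + l = S.card := by
    rw [hzdef, hldef, ← hfe]
    exact Finset.card_filter_add_card_filter_not (fun g => v g = 0)
  have hm : S.val.map v = Multiset.replicate z (0:ℝ) + Multiset.replicate l 1 := by
    have h0 : (S.val.map v).filter (· = 0) = Multiset.replicate z 0 := by
      rw [Multiset.eq_replicate]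
      refine ⟨?_, fun b hb => (Multiset.mem_filter.1 hb).2⟩
      rw [Multiset.filter_map, Multiset.card_map]
      rfl
    have h1 : (S.val.map v).filter (fun x => ¬ x = 0) = Multiset.replicate l 1 := by
      rw [Multiset.eq_replicate]
      constructor
      · rw [Multiset.filter_map, Multiset.card_map]
        have heq : Multiset.filter ((fun x => ¬ x = 0) ∘ v) S.val
            = Multiset.filter (fun g => v g = 1) S.val := by
          apply Multiset.filter_congr
          intro g hg
          rcases hbin g hg with h | h <;> simp [h]
        rw [heq]
        rfl
      · intro b hb
        obtain ⟨hb1, hb2⟩ := Multiset.mem_filter.1 hb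
        obtain ⟨g, hg, rfl⟩ := Multiset.mem_map.1 hb1
        rcases hbin g hg with h | h
        · exact absurd h hb2
        · exact h
    rw [← Multiset.filter_add_not (fun x => x = 0) (S.val.map v), h0, h1]
  have hl1 : 1 ≤ l := by nlinarith
  have hN : 1 ≤ S.card := by omega
  have htpos : (0:ℝ) < (t:ℝ) + 1 := by positivity
  have hnat : z * (t+1) + 1 ≤ t * S.card := by rw [← hcard]; nlinarith [hz]
  have hlb : (z:ℝ) < (t:ℝ)/((t:ℝ)+1) * (S.card : ℝ) := by
    rw [div_mul_eq_mul_div, lt_div_iff₀ htpos]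
    have h' : (z:ℝ) * ((t:ℝ)+1) + 1 ≤ (t:ℝ) * (S.card:ℝ) := by exact_mod_cast hnat
    linarith
  have hub : (t:ℝ)/((t:ℝ)+1) * (S.card : ℝ) ≤ (S.card : ℝ) := by
    rw [div_mul_eq_mul_div, div_le_iff₀ htpos]
    have : (0:ℝ) ≤ S.card := by positivity
    nlinarith
  set c := ⌈(t:ℝ)/((t:ℝ)+1) * (S.card : ℝ)⌉ with hc
  have hclb : (z:ℤ) < c := Int.lt_ceil.2 hlb
  have hcub : c ≤ (S.card : ℤ) := Int.ceil_le.2 (by exact_mod_cast hub)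
  have hk1 : z + 1 ≤ c.toNat := by omega
  have hk2 : c.toNat ≤ S.card := by omega
  unfold quantVal
  rw [hm, sort_repl]
  rw [List.getD_append_right _ _ _ _ (by simp; omega)]
  rw [List.getD_eq_getElem _ _ (by simp; omega)]
  simp

lemma exists_assignment {M : Type*} [DecidableEq M] {n : ℕ} (hn : 0 < n)
    (S : Finset M) (c : Fin n → ℕ) (h : S.card ≤ ∑ i, c i) :
    ∃ b : M → Fin n, ∀ i, (S.filter fun g => b g = i).card ≤ c i := by
  classical
  induction S using Finset.induction_on with
  | empty => exact ⟨fun _ => ⟨0, hn⟩, fun i => by simp⟩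
  | @insert x s hx ih =>
    obtain ⟨b, hb⟩ := ih (le_trans (by rw [Finset.card_insert_of_notMem hx]; omega) h)
    have hsum : ∑ i, (s.filter fun g => b g = i).card = s.card :=
      (Finset.card_eq_sum_card_fiberwise (fun g _ => Finset.mem_univ (b g))).symm
    have hex : ∃ i0, (s.filter fun g => b g = i0).card < c i0 := by
      by_contra h'
      push_neg at h'
      have h2 := Finset.sum_le_sum (fun i (_ : i ∈ Finset.univ) => h' i)
      rw [hsum] at h2
      rw [Finset.card_insert_of_notMem hx] at h
      omega
    obtain ⟨i0, hi0⟩ := hex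
    refine ⟨Function.update b x i0, fun i => ?_⟩
    have hfe : (s.filter fun g => Function.update b x i0 g = i) = s.filter fun g => b g = i := by
      apply Finset.filter_congr
      intro g hg
      have hgx : g ≠ x := fun hgx => hx (hgx ▸ hg)
      rw [Function.update_of_ne hgx]
    rw [Finset.filter_insert]
    by_cases hxi : Function.update b x i0 x = i
    · rw [if_pos hxi, Finset.card_insert_of_notMem (fun hmem => hx (Finset.mem_filter.1 hmem).1),
        hfe]
      have : i = i0 := by rw [← hxi, Function.update_self]
      subst this
      omega
    · rw [if_neg hxi, hfe]
      exact hb i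


/-- converse of the necessary conditions. With common quantile
τ = t/(t+1) and binary valuations, if every agent can be matched to a distinct
value-1 item and |M₀| ≤ t·|M₁| − n, then an allocation of all items exists in which
every agent's quantile value is 1. -/
theorem esw_one_sufficient (n t : ℕ) (hn : 0 < n) (ht : 0 < t)
    {M : Type*} [Fintype M] [DecidableEq M]
    (v : Fin n → M → ℝ) (hbin : ∀ i g, v i g = 0 ∨ v i g = 1)
    (hmatch : ∃ f : Fin n → M, Function.Injective f ∧ ∀ i, v i (f i) = 1)
    (hcount : ((Finset.univ.filter fun g => ∀ i, v i g = 0).card : ℤ) ≤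
        (t : ℤ) * ((Finset.univ.filter fun g => ¬ ∀ i, v i g = 0).card : ℤ) - (n : ℤ)) :
    ∃ A : Fin n → Finset M,
      (∀ i j, i ≠ j → Disjoint (A i) (A j)) ∧
      Finset.univ.biUnion A = Finset.univ ∧
      (∀ i, quantVal ((t : ℝ) / ((t : ℝ) + 1)) (v i) (A i) = 1) := by
  classical
  obtain ⟨f, hfinj, hf1⟩ := hmatch
  set M0 : Finset M := Finset.univ.filter (fun g => ∀ i, v i g = 0) with hM0
  set M1 : Finset M := Finset.univ.filter (fun g => ¬ ∀ i, v i g = 0) with hM1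
  have hM1mem : ∀ g, g ∈ M1 ↔ ¬ ∀ i, v i g = 0 := by
    intro g; simp [hM1]
  have hM0mem : ∀ g, g ∈ M0 ↔ ∀ i, v i g = 0 := by
    intro g; simp [hM0]
  have hM1ex : ∀ g ∈ M1, ∃ i, v i g = 1 := by
    intro g hg
    rw [hM1mem] at hg
    push_neg at hg
    obtain ⟨i, hi⟩ := hg
    exact ⟨i, (hbin i g).resolve_left hi⟩
  -- the assignment of value-1 items
  let a : M → Fin n := fun g =>
    if h : ∃ i, f i = g then h.choose
    else if h : ∃ i, v i g = 1 then h.choose else ⟨0, hn⟩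
  have haf : ∀ i, a (f i) = i := by
    intro i
    have h : ∃ j, f j = f i := ⟨i, rfl⟩
    simp only [a, dif_pos h]
    exact hfinj h.choose_spec
  have hav : ∀ g ∈ M1, v (a g) g = 1 := by
    intro g hg
    by_cases h : ∃ i, f i = g
    · simp only [a, dif_pos h]
      have hthis := hf1 h.choose
      rw [h.choose_spec] at hthis
      exact hthis
    · have h2 : ∃ i, v i g = 1 := hM1ex g hg
      simp only [a, dif_neg h, dif_pos h2]
      exact h2.choose_spec
  set L : Fin n → ℕ := fun i => (M1.filter fun g => a g = i).card with hL
  have hfiM1 : ∀ i, f i ∈ M1 := by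
    intro i
    rw [hM1mem]
    intro hall
    have := hall i
    rw [hf1 i] at this
    norm_num at this
  have hL1 : ∀ i, 1 ≤ L i := by
    intro i
    rw [hL]
    apply Finset.card_pos.2
    exact ⟨f i, Finset.mem_filter.2 ⟨hfiM1 i, haf i⟩⟩
  have hsumL : ∑ i, L i = M1.card :=
    (Finset.card_eq_sum_card_fiberwise (fun g _ => Finset.mem_univ (a g))).symm
  -- capacities
  set c : Fin n → ℕ := fun i => t * L i - 1 with hc
  have htL : ∀ i, 1 ≤ t * L i := fun i => Nat.one_le_iff_ne_zero.2 (by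
    have := hL1 i; positivity)
  have hci : ∀ i, ((c i : ℕ) : ℤ) = (t : ℤ) * (L i : ℤ) - 1 := by
    intro i
    rw [hc]
    push_cast [Nat.cast_sub (htL i)]
    ring
  have hcap : M0.card ≤ ∑ i, c i := by
    have hZ : (M0.card : ℤ) ≤ ∑ i, ((c i : ℕ) : ℤ) := by
      calc (M0.card : ℤ) ≤ (t : ℤ) * M1.card - n := hcount
        _ = ∑ i : Fin n, ((t : ℤ) * (L i : ℤ) - 1) := by
            rw [Finset.sum_sub_distrib, ← Finset.mul_sum, ← Nat.cast_sum, hsumL]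
            simp
        _ = ∑ i, ((c i : ℕ) : ℤ) := Finset.sum_congr rfl (fun i _ => (hci i).symm)
    exact_mod_cast hZ
  obtain ⟨b, hb⟩ := exists_assignment hn M0 c hcap
  -- the allocation
  set A : Fin n → Finset M := fun i =>
    (M1.filter fun g => a g = i) ∪ (M0.filter fun g => b g = i) with hA
  have hM01 : ∀ g, g ∈ M0 → g ∈ M1 → False := by
    intro g h0 h1
    rw [hM0mem] at h0
    rw [hM1mem] at h1
    exact h1 h0
  have hAmem : ∀ i g, g ∈ A i ↔ (g ∈ M1 ∧ a g = i) ∨ (g ∈ M0 ∧ b g = i) := by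
    intro i g
    simp [hA, Finset.mem_union, Finset.mem_filter]
  refine ⟨A, ?_, ?_, ?_⟩
  · intro i j hij
    rw [Finset.disjoint_left]
    intro g hgi hgj
    rw [hAmem] at hgi hgj
    rcases hgi with ⟨h1, h2⟩ | ⟨h1, h2⟩ <;> rcases hgj with ⟨h3, h4⟩ | ⟨h3, h4⟩
    · exact hij (h2 ▸ h4 ▸ rfl)
    · exact hM01 g h3 h1
    · exact hM01 g h1 h3
    · exact hij (h2 ▸ h4 ▸ rfl)
  · ext g
    simp only [Finset.mem_biUnion, Finset.mem_univ, iff_true, true_and]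
    by_cases hg : ∀ i, v i g = 0
    · exact ⟨b g, (hAmem _ g).2 (Or.inr ⟨(hM0mem g).2 hg, rfl⟩)⟩
    · exact ⟨a g, (hAmem _ g).2 (Or.inl ⟨(hM1mem g).2 hg, rfl⟩)⟩
  · intro i
    apply quantVal_eq_one t ht
    · intro g _
      exact hbin i g
    · have hone : ((A i).filter fun g => v i g = 1) = M1.filter fun g => a g = i := by
        ext g
        simp only [Finset.mem_filter]
        constructor
        · rintro ⟨hgA, hgv⟩
          rw [hAmem] at hgA
          rcases hgA with ⟨h1, h2⟩ | ⟨h1, h2⟩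
          · exact ⟨h1, h2⟩
          · rw [hM0mem] at h1
            rw [h1 i] at hgv
            norm_num at hgv
        · rintro ⟨h1, h2⟩
          refine ⟨(hAmem i g).2 (Or.inl ⟨h1, h2⟩), ?_⟩
          rw [← h2]
          exact hav g h1
      have hzero : ((A i).filter fun g => v i g = 0) = M0.filter fun g => b g = i := by
        ext g
        simp only [Finset.mem_filter]
        constructor
        · rintro ⟨hgA, hgv⟩
          rw [hAmem] at hgA
          rcases hgA with ⟨h1, h2⟩ | ⟨h1, h2⟩
          · rw [← h2] at hgv
            rw [hav g h1] at hgv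
            norm_num at hgv
          · exact ⟨h1, h2⟩
        · rintro ⟨h1, h2⟩
          refine ⟨(hAmem i g).2 (Or.inr ⟨h1, h2⟩), ?_⟩
          rw [hM0mem] at h1
          exact h1 i
      rw [hone, hzero]
      have h1 := hb i
      have h2 := htL i
      simp only [hc, hL] at h1 h2
      omega
end

section
/- With identical valuations v (all agents the same) and common quantile τ over m = kn items, sort items so v(g_1) ≥ … ≥ v(g_m), and let k' = min(k, k − ⌈τk⌉ + 1). The allocation giving agent t the bundle {g_{(t−1)k'+1},…,g_{tk'}} plus arbitrary remaining items (so each bundle has size k) achieves utilitarian social welfare Σ_{t=1}^n v(g_{tk'}), and this is the maximum utilitarian welfare over all balanced allocations. -/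
private lemma msort_eq {M : Multiset ℝ} {l : List ℝ} (hs : l.Pairwise (· ≤ ·))
    (hM : (l : Multiset ℝ) = M) : M.sort (· ≤ ·) = l := by
  subst hM
  exact List.Perm.eq_of_pairwise' (Multiset.pairwise_sort _ _) hs
    (Multiset.coe_eq_coe.mp (Multiset.sort_eq _ _))

private lemma fsort_eq {S : Finset ℕ} {l : List ℕ} (hs : l.Pairwise (· ≤ ·))
    (hM : (l : Multiset ℕ) = S.val) : S.sort (· ≤ ·) = l :=
  List.Perm.eq_of_pairwise' (Finset.pairwise_sort _ _) hs
    (Multiset.coe_eq_coe.mp (by rw [Finset.sort_eq, ← hM]))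

private lemma sort_map_antitone {v : ℕ → ℝ} (hmono : ∀ i j : ℕ, i ≤ j → v j ≤ v i)
    (S : Finset ℕ) :
    (S.val.map v).sort (· ≤ ·) = ((S.sort (· ≤ ·)).map v).reverse := by
  apply msort_eq
  · rw [List.pairwise_reverse, List.pairwise_map]
    exact (Finset.pairwise_sort S (· ≤ ·)).imp fun h => hmono _ _ h
  · rw [Multiset.coe_reverse]
    rw [← Multiset.map_coe, Finset.sort_eq]

/-- `quantVal` of a set of size `k` is `v` of the `k'`-th smallest index. -/
private lemma quantVal_eq {v : ℕ → ℝ} (hmono : ∀ i j : ℕ, i ≤ j → v j ≤ v i)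
    {τ : ℝ} (hτ1 : τ ≤ 1) {k : ℕ} (hk : 0 < k) {S : Finset ℕ} (hcard : S.card = k) :
    quantVal τ v S =
      v ((S.sort (· ≤ ·)).getD (min k (k - (⌈τ * (k : ℝ)⌉).toNat + 1) - 1) 0) := by
  have hq : (⌈τ * (k : ℝ)⌉).toNat ≤ k := by
    have h1 : ⌈τ * (k : ℝ)⌉ ≤ (k : ℤ) := by
      rw [Int.ceil_le]
      push_cast
      nlinarith [Nat.cast_nonneg (α := ℝ) k]
    omega
  set q := (⌈τ * (k : ℝ)⌉).toNat with hqdef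
  set k' := min k (k - q + 1) with hk'def
  have hlen : (S.sort (· ≤ ·)).length = k := by rw [Finset.length_sort, hcard]
  rw [quantVal, sort_map_antitone hmono, hcard]
  have h1 : q - 1 < (((S.sort (· ≤ ·)).map v).reverse).length := by
    rw [List.length_reverse, List.length_map, hlen]; omega
  have h2 : k' - 1 < (S.sort (· ≤ ·)).length := by rw [hlen]; omega
  rw [List.getD_eq_getElem _ _ h1, List.getElem_reverse, List.getElem_map,
    List.getD_eq_getElem _ _ h2]
  have hidx2 : ((S.sort (· ≤ ·)).map v).length - 1 - (q - 1) = k' - 1 := by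
    simp only [List.length_map, hlen]; omega
  simp only [hidx2]

private lemma card_filter_le_sortElem (S : Finset ℕ) (p : ℕ)
    (hp : p < (S.sort (· ≤ ·)).length) :
    p + 1 ≤ (S.filter (fun x => x ≤ (S.sort (· ≤ ·))[p])).card := by
  set l := S.sort (· ≤ ·) with hl
  have hnd : l.Nodup := Finset.sort_nodup _ _
  have hndt : (l.take (p + 1)).Nodup := hnd.sublist (List.take_sublist _ _)
  have hsub : (l.take (p + 1)).toFinset ⊆ S.filter (fun x => x ≤ l[p]) := by
    intro x hx
    rw [List.mem_toFinset] at hx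
    obtain ⟨j, hj, hjx⟩ := List.getElem_of_mem hx
    rw [List.getElem_take] at hjx
    have hjl : j < l.length := lt_of_lt_of_le (by
      have := hj; simp only [List.length_take] at this; omega) le_rfl
    have hjp : j ≤ p := by
      have := hj; simp only [List.length_take] at this; omega
    rw [Finset.mem_filter]
    constructor
    · rw [← hjx]
      exact (Finset.mem_sort (· ≤ ·)).mp (List.getElem_mem hjl)
    · rw [← hjx]
      exact (Finset.pairwise_sort S (· ≤ ·)).rel_get_of_le
        (show (⟨j, hjl⟩ : Fin l.length) ≤ ⟨p, hp⟩ from hjp)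
  have hcard : (l.take (p + 1)).toFinset.card = p + 1 := by
    rw [List.toFinset_card_of_nodup hndt, List.length_take]
    omega
  calc p + 1 = (l.take (p + 1)).toFinset.card := hcard.symm
    _ ≤ _ := Finset.card_le_card hsub

private lemma Ico_lt_disjoint {a b c d : ℕ} (h : b ≤ c) :
    Disjoint (Finset.Ico a b) (Finset.Ico c d) := by
  rw [Finset.disjoint_left]
  intro x hx hx'
  rw [Finset.mem_Ico] at hx hx'
  omega

private lemma sort_union {S T : Finset ℕ} (h : ∀ x ∈ S, ∀ y ∈ T, x < y) :
    (S ∪ T).sort (· ≤ ·) = S.sort (· ≤ ·) ++ T.sort (· ≤ ·) := by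
  have hd : Disjoint S T := by
    rw [Finset.disjoint_left]
    intro a haS haT
    exact absurd (h a haS a haT) (lt_irrefl a)
  apply fsort_eq
  · rw [List.pairwise_append]
    refine ⟨Finset.pairwise_sort _ _, Finset.pairwise_sort _ _, ?_⟩
    intro x hx y hy
    exact (h x ((Finset.mem_sort _).mp hx) y ((Finset.mem_sort _).mp hy)).le
  · rw [← Finset.disjUnion_eq_union S T hd]
    show ((S.sort (· ≤ ·) : List ℕ) : Multiset ℕ) + (T.sort (· ≤ ·) : List ℕ) = S.val + T.val
    rw [Finset.sort_eq, Finset.sort_eq]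

private lemma sort_Ico (a m : ℕ) :
    (Finset.Ico a (a + m)).sort (· ≤ ·) = List.range' a m := by
  apply fsort_eq
  · rw [List.range'_eq_map_range, List.pairwise_map]
    exact (List.pairwise_le_range (n := m)).imp fun h => by omega
  · rw [Nat.Ico_eq_range']
    simp

/-- identical valuations, balanced allocations of the items
{0,…,kn−1} sorted so v 0 ≥ v 1 ≥ …. With k' = min(k, k − ⌈τk⌉ + 1), the greedy
allocation achieves utilitarian welfare ∑ₜ v(t·k' + k' − 1) (0-indexed), and this is
the maximum utilitarian welfare over all balanced allocations. -/
theorem identical_balanced_usw_greedy (n k : ℕ) (hn : 0 < n) (hk : 0 < k)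
    (τ : ℝ) (hτ0 : 0 ≤ τ) (hτ1 : τ ≤ 1)
    (v : ℕ → ℝ) (hmono : ∀ i j : ℕ, i ≤ j → v j ≤ v i) :
    IsGreatest {u : ℝ | ∃ A : Fin n → Finset ℕ,
        (∀ i j, i ≠ j → Disjoint (A i) (A j)) ∧
        Finset.univ.biUnion A = Finset.range (k * n) ∧
        (∀ i, (A i).card = k) ∧
        u = ∑ i, quantVal τ v (A i)}
      (∑ t : Fin n,
        v ((t : ℕ) * min k (k - (⌈τ * (k : ℝ)⌉).toNat + 1) +
            min k (k - (⌈τ * (k : ℝ)⌉).toNat + 1) - 1)) := by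
  have hq : (⌈τ * (k : ℝ)⌉).toNat ≤ k := by
    have h1 : ⌈τ * (k : ℝ)⌉ ≤ (k : ℤ) := by
      rw [Int.ceil_le]
      push_cast
      nlinarith [Nat.cast_nonneg (α := ℝ) k]
    omega
  set q := (⌈τ * (k : ℝ)⌉).toNat with hqdef
  set k' := min k (k - q + 1) with hk'def
  have hk'1 : 1 ≤ k' := by omega
  have hk'k : k' ≤ k := by omega
  set d := k - k' with hddef
  -- the greedy allocation
  set A0 : ℕ → Finset ℕ := fun t =>
    Finset.Ico (t * k') (t * k' + k') ∪
      Finset.Ico (n * k' + t * d) (n * k' + t * d + d) with hA0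
  have hcross : ∀ t : ℕ, t < n → ∀ x ∈ Finset.Ico (t * k') (t * k' + k'),
      ∀ y ∈ Finset.Ico (n * k' + t * d) (n * k' + t * d + d), x < y := by
    intro t ht x hx y hy
    rw [Finset.mem_Ico] at hx hy
    have h1 : t * k' + k' ≤ n * k' := by
      calc t * k' + k' = (t + 1) * k' := by ring
        _ ≤ n * k' := Nat.mul_le_mul_right k' ht
    omega
  have hcards : ∀ t : ℕ, t < n → (A0 t).card = k := by
    intro t ht
    rw [hA0]
    have hdisj : Disjoint (Finset.Ico (t * k') (t * k' + k'))
        (Finset.Ico (n * k' + t * d) (n * k' + t * d + d)) := by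
      rw [Finset.disjoint_left]
      intro x hx hx'
      exact absurd (hcross t ht x hx x hx') (lt_irrefl x)
    rw [Finset.card_union_of_disjoint hdisj, Nat.card_Ico, Nat.card_Ico]
    omega
  have hdisjA : ∀ u w : ℕ, u < n → w < n → u < w → Disjoint (A0 u) (A0 w) := by
    intro u w hu hw huw
    have huk : u * k' + k' ≤ w * k' := by
      calc u * k' + k' = (u + 1) * k' := by ring
        _ ≤ w * k' := Nat.mul_le_mul_right k' huw
    have hwk : w * k' + k' ≤ n * k' := by
      calc w * k' + k' = (w + 1) * k' := by ring
        _ ≤ n * k' := Nat.mul_le_mul_right k' hw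
    have hud : n * k' + u * d + d ≤ n * k' + w * d := by
      have : u * d + d ≤ w * d := by
        calc u * d + d = (u + 1) * d := by ring
          _ ≤ w * d := Nat.mul_le_mul_right d huw
      omega
    rw [hA0, Finset.disjoint_union_left]
    constructor
    · rw [Finset.disjoint_union_right]
      exact ⟨Ico_lt_disjoint huk, Ico_lt_disjoint (by omega)⟩
    · rw [Finset.disjoint_union_right]
      exact ⟨(Ico_lt_disjoint (by omega)).symm, Ico_lt_disjoint hud⟩
  set A : Fin n → Finset ℕ := fun t => A0 t with hA
  have hAd : ∀ i j : Fin n, i ≠ j → Disjoint (A i) (A j) := by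
    intro i j hij
    rcases lt_or_gt_of_ne (fun h => hij (Fin.ext h) : (i : ℕ) ≠ j) with h | h
    · exact hdisjA i j i.isLt j.isLt h
    · exact (hdisjA j i j.isLt i.isLt h).symm
  have hAcard : ∀ i : Fin n, (A i).card = k := fun i => hcards i i.isLt
  have hAunion : Finset.univ.biUnion A = Finset.range (k * n) := by
    have hsub : Finset.univ.biUnion A ⊆ Finset.range (k * n) := by
      intro x hx
      rw [Finset.mem_biUnion] at hx
      obtain ⟨t, _, hxt⟩ := hx
      rw [hA] at hxt
      simp only [hA0, Finset.mem_union, Finset.mem_Ico] at hxt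
      rw [Finset.mem_range]
      have h1 : (t : ℕ) * k' + k' ≤ n * k' := by
        calc (t : ℕ) * k' + k' = ((t : ℕ) + 1) * k' := by ring
          _ ≤ n * k' := Nat.mul_le_mul_right k' t.isLt
      have h2 : (t : ℕ) * d + d ≤ n * d := by
        calc (t : ℕ) * d + d = ((t : ℕ) + 1) * d := by ring
          _ ≤ n * d := Nat.mul_le_mul_right d t.isLt
      have h3 : n * k' + n * d = k * n := by
        rw [← Nat.mul_add]
        rw [mul_comm]
        congr 1
        omega
      omega
    have hcardeq : (Finset.univ.biUnion A).card = (Finset.range (k * n)).card := by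
      rw [Finset.card_biUnion (fun i _ j _ hij => hAd i j hij), Finset.card_range]
      calc ∑ i : Fin n, (A i).card = ∑ _i : Fin n, k := by
            exact Finset.sum_congr rfl fun i _ => hAcard i
        _ = n * k := by simp [Finset.sum_const, mul_comm]
        _ = k * n := mul_comm n k
    exact Finset.eq_of_subset_of_card_le hsub (le_of_eq hcardeq.symm)
  -- value of each greedy bundle
  have hAval : ∀ t : Fin n, quantVal τ v (A t) = v ((t : ℕ) * k' + k' - 1) := by
    intro t
    rw [quantVal_eq hmono hτ1 hk (hAcard t)]
    have hsort : (A t).sort (· ≤ ·) =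
        List.range' ((t : ℕ) * k') k' ++ List.range' (n * k' + (t : ℕ) * d) d := by
      rw [hA]
      show (A0 t).sort (· ≤ ·) = _
      rw [hA0]
      rw [sort_union (hcross t t.isLt), sort_Ico, sort_Ico]
    rw [hsort]
    have hlen1 : (List.range' ((t : ℕ) * k') k').length = k' := List.length_range'
    have hidx : k' - 1 < (List.range' ((t : ℕ) * k') k' ++
        List.range' (n * k' + (t : ℕ) * d) d).length := by
      rw [List.length_append, hlen1]; omega
    rw [List.getD_eq_getElem _ _ hidx, List.getElem_append_left (by rw [hlen1]; omega),
      List.getElem_range'_1]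
    congr 1
    omega
  constructor
  · -- membership
    refine ⟨A, hAd, hAunion, hAcard, ?_⟩
    exact Finset.sum_congr rfl fun t _ => (hAval t).symm
  · -- upper bound
    rintro u ⟨B, hBd, hBunion, hBcard, rfl⟩
    set b : Fin n → ℕ := fun i => ((B i).sort (· ≤ ·)).getD (k' - 1) 0 with hb
    have hlenB : ∀ i, ((B i).sort (· ≤ ·)).length = k := by
      intro i; rw [Finset.length_sort, hBcard]
    have hidxB : ∀ i, k' - 1 < ((B i).sort (· ≤ ·)).length := by
      intro i; rw [hlenB]; omega
    have hbval : ∀ i, quantVal τ v (B i) = v (b i) := by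
      intro i
      rw [quantVal_eq hmono hτ1 hk (hBcard i)]
    have hcnt : ∀ i, k' ≤ ((B i).filter (fun x => x ≤ b i)).card := by
      intro i
      have hx := hidxB i
      have := card_filter_le_sortElem (B i) (k' - 1) hx
      have hbeq : b i = ((B i).sort (· ≤ ·))[k' - 1] := List.getD_eq_getElem _ _ hx
      rw [← hbeq] at this
      omega
    set σ := Tuple.sort b with hσdef
    have hσmono : Monotone (b ∘ σ) := Tuple.monotone_sort b
    have key : ∀ t : Fin n, ((t : ℕ) + 1) * k' ≤ b (σ t) + 1 := by
      intro t
      set Bd := b (σ t) with hBd'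
      have hUsub : (Finset.Iic t).biUnion (fun s => (B (σ s)).filter (fun x => x ≤ Bd))
          ⊆ Finset.range (Bd + 1) := by
        intro x hx
        rw [Finset.mem_biUnion] at hx
        obtain ⟨s, _, hxs⟩ := hx
        rw [Finset.mem_filter] at hxs
        rw [Finset.mem_range]
        omega
      have hUcard : ((Finset.Iic t).biUnion
          (fun s => (B (σ s)).filter (fun x => x ≤ Bd))).card =
          ∑ s ∈ Finset.Iic t, ((B (σ s)).filter (fun x => x ≤ Bd)).card := by
        apply Finset.card_biUnion
        intro s _ s' _ hss'
        exact Finset.disjoint_filter_filter (hBd (σ s) (σ s')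
          (fun h => hss' (σ.injective h)))
      have hterm : ∀ s ∈ Finset.Iic t, k' ≤ ((B (σ s)).filter (fun x => x ≤ Bd)).card := by
        intro s hs
        rw [Finset.mem_Iic] at hs
        have hmonos : b (σ s) ≤ Bd := hσmono hs
        have hsubf : (B (σ s)).filter (fun x => x ≤ b (σ s)) ⊆
            (B (σ s)).filter (fun x => x ≤ Bd) := by
          intro x hx
          rw [Finset.mem_filter] at hx ⊢
          exact ⟨hx.1, le_trans hx.2 hmonos⟩
        calc k' ≤ ((B (σ s)).filter (fun x => x ≤ b (σ s))).card := hcnt (σ s)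
          _ ≤ _ := Finset.card_le_card hsubf
      calc ((t : ℕ) + 1) * k' = ∑ _s ∈ Finset.Iic t, k' := by
            rw [Finset.sum_const, Fin.card_Iic, smul_eq_mul]
        _ ≤ ∑ s ∈ Finset.Iic t, ((B (σ s)).filter (fun x => x ≤ Bd)).card :=
            Finset.sum_le_sum hterm
        _ = ((Finset.Iic t).biUnion (fun s => (B (σ s)).filter (fun x => x ≤ Bd))).card :=
            hUcard.symm
        _ ≤ (Finset.range (Bd + 1)).card := Finset.card_le_card hUsub
        _ = Bd + 1 := Finset.card_range _
    have hsum : ∑ i, quantVal τ v (B i) = ∑ t, v (b (σ t)) := by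
      rw [Finset.sum_congr rfl fun i _ => hbval i]
      exact (Equiv.sum_comp σ (fun i => v (b i))).symm
    rw [hsum]
    apply Finset.sum_le_sum
    intro t _
    apply hmono
    have := key t
    have h1 : ((t : ℕ) + 1) * k' = (t : ℕ) * k' + k' := by ring
    rw [h1] at this
    set a := (t : ℕ) * k' with ha
    omega
end
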